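/- Let R > 0 and let f(d,r) be the one-particle profile. Then: (i) for every d ≥ 0, the function r ↦ f(d,r) is concave on the interval [max{R, d−R}, d+R] (the intersection of its support with [R,∞)); and (ii) if d ≥ R, then r ↦ f(d,r) is concave on its full support [d−R, d+R]. (Concavity of the one-particle profile, Appendix B Proposition.) -/

import Mathlib

open MeasureTheory Real Set

noncomputable section

/-- The plane `ℝ²`. -/
abbrev Plane : Type := EuclideanSpace ℝ (Fin 2)

/-- The one-particle profile `f(d,r)`: `2r/R²` for `r ≤ R - d`; `0` for `r > R + d` or
`r < d - R`; and `(2r/(πR²)) arccos((d²+r²-R²)/(2dr))` otherwise. -/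
def profile (R d r : ℝ) : ℝ :=
  if r ≤ R - d then 2 * r / R ^ 2
  else if R + d < r ∨ r < d - R then 0
  else 2 * r / (π * R ^ 2) * Real.arccos ((d ^ 2 + r ^ 2 - R ^ 2) / (2 * d * r))

/-! ### Auxiliary definitions and lemmas for the concavity proof -/

/-- The smooth branch of the profile. -/
def gfun (R d : ℝ) : ℝ → ℝ :=
  fun r => 2 * r / (π * R ^ 2) * Real.arccos ((d ^ 2 + r ^ 2 - R ^ 2) / (2 * d * r))

/-- `(2dr)²(1-u²)` where `u` is the argument of `arccos`. -/
def S2f (R d : ℝ) : ℝ → ℝ := fun r => 4 * d ^ 2 * r ^ 2 - (d ^ 2 + r ^ 2 - R ^ 2) ^ 2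

/-- Explicit first derivative of `gfun` on the relevant region. -/
def F1f (R d : ℝ) : ℝ → ℝ :=
  fun r => 2 / (π * R ^ 2) * Real.arccos ((d ^ 2 + r ^ 2 - R ^ 2) / (2 * d * r))
    - 2 / (π * R ^ 2) * ((r ^ 2 + R ^ 2 - d ^ 2) / Real.sqrt (S2f R d r))

lemma concaveOn_congrOn {s : Set ℝ} {f g : ℝ → ℝ} (h : ConcaveOn ℝ s f)
    (he : Set.EqOn g f s) : ConcaveOn ℝ s g := by
  refine ⟨h.1, fun x hx y hy a b ha hb hab => ?_⟩
  rw [he hx, he hy, he (h.1 hx hy ha hb hab)]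
  exact h.2 hx hy ha hb hab

lemma concaveOn_singleton (c : ℝ) (f : ℝ → ℝ) : ConcaveOn ℝ {c} f := by
  refine ⟨convex_singleton c, fun x hx y hy a b ha hb hab => ?_⟩
  simp only [Set.mem_singleton_iff] at hx hy
  rw [hx, hy]
  have h1 : a • c + b • c = c := by
    rw [smul_eq_mul, smul_eq_mul, ← add_mul, hab, one_mul]
  rw [h1, smul_eq_mul, smul_eq_mul, ← add_mul, hab, one_mul]

/-- Key algebraic inequality `(r²+R²-d²)³ ≤ 8r⁴R²`. -/
lemma key_ineq (R d x : ℝ) (hR : 0 < R) (hd : 0 < d) (hx : 0 < x)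
    (h1 : d - R < x) (h2 : x < d + R) (hc : R ≤ x ∨ R ≤ d) :
    (x ^ 2 + R ^ 2 - d ^ 2) ^ 3 ≤ 8 * x ^ 4 * R ^ 2 := by
  have hrhs : (0:ℝ) ≤ 8 * x ^ 4 * R ^ 2 := by positivity
  rcases le_or_gt (x ^ 2 + R ^ 2 - d ^ 2) 0 with h0 | h0
  · calc (x ^ 2 + R ^ 2 - d ^ 2) ^ 3 ≤ 0 := Odd.pow_nonpos (by decide) h0
      _ ≤ _ := hrhs
  rcases le_or_gt R x with h | h
  · have hB : x ^ 2 + R ^ 2 - d ^ 2 ≤ 2 * x * R := by nlinarith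
    calc (x ^ 2 + R ^ 2 - d ^ 2) ^ 3 ≤ (2 * x * R) ^ 3 := pow_le_pow_left₀ h0.le hB 3
      _ = 8 * x ^ 3 * R ^ 2 * R := by ring
      _ ≤ 8 * x ^ 3 * R ^ 2 * x := by
          nlinarith [mul_le_mul_of_nonneg_left h (by positivity : (0:ℝ) ≤ 8 * x ^ 3 * R ^ 2)]
      _ = 8 * x ^ 4 * R ^ 2 := by ring
  · have hRd : R ≤ d := hc.resolve_left (by linarith)
    have hB : x ^ 2 + R ^ 2 - d ^ 2 ≤ x ^ 2 := by nlinarith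
    calc (x ^ 2 + R ^ 2 - d ^ 2) ^ 3 ≤ (x ^ 2) ^ 3 := pow_le_pow_left₀ h0.le hB 3
      _ = x ^ 4 * (x * x) := by ring
      _ ≤ x ^ 4 * (R * R) := by
          nlinarith [mul_le_mul (mul_le_mul h.le h.le hx.le hR.le) (le_refl (x ^ 4))
            (pow_nonneg hx.le 4) (by positivity : (0:ℝ) ≤ R * R)]
      _ ≤ 8 * x ^ 4 * R ^ 2 := by nlinarith [pow_nonneg hx.le 4, sq_nonneg R]

section Derivs
variable {R d x : ℝ}

lemma u_facts (hd : 0 < d) (hx : 0 < x) (hS2 : 0 < S2f R d x) :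
    ((d ^ 2 + x ^ 2 - R ^ 2) / (2 * d * x)) ^ 2 < 1 := by
  have h4 : (0:ℝ) < (2 * d * x) ^ 2 := by positivity
  rw [div_pow, div_lt_one h4]
  have := hS2
  simp only [S2f] at this
  nlinarith

lemma hasDerivAt_u (hd : 0 < d) (hx : 0 < x) :
    HasDerivAt (fun r : ℝ => (d ^ 2 + r ^ 2 - R ^ 2) / (2 * d * r))
      ((x ^ 2 + R ^ 2 - d ^ 2) / (2 * d * x ^ 2)) x := by
  have hnum : HasDerivAt (fun r : ℝ => d ^ 2 + r ^ 2 - R ^ 2) (2 * x) x := by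
    simpa using ((hasDerivAt_pow 2 x).const_add (d ^ 2)).sub_const (R ^ 2)
  have hden : HasDerivAt (fun r : ℝ => 2 * d * r) (2 * d) x := by
    simpa using (hasDerivAt_id x).const_mul (2 * d)
  have hdenne : 2 * d * x ≠ 0 := by positivity
  have h := hnum.div hden hdenne
  refine h.congr_deriv ?_
  field_simp
  ring

lemma sqrt_one_sub_u_sq (hd : 0 < d) (hx : 0 < x) (hS2 : 0 < S2f R d x) :
    Real.sqrt (1 - ((d ^ 2 + x ^ 2 - R ^ 2) / (2 * d * x)) ^ 2)
      = Real.sqrt (S2f R d x) / (2 * d * x) := by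
  have hdenne : 2 * d * x ≠ 0 := by positivity
  have h1 : 1 - ((d ^ 2 + x ^ 2 - R ^ 2) / (2 * d * x)) ^ 2 = S2f R d x / (2 * d * x) ^ 2 := by
    simp only [S2f]
    field_simp
    ring
  rw [h1, Real.sqrt_div hS2.le, Real.sqrt_sq (by positivity)]

lemma hasDerivAt_g (hR : 0 < R) (hd : 0 < d) (hx : 0 < x) (hS2 : 0 < S2f R d x) :
    HasDerivAt (gfun R d) (F1f R d x) x := by
  have hπ : 0 < π := Real.pi_pos
  have hun := u_facts hd hx hS2
  have hne1 : (d ^ 2 + x ^ 2 - R ^ 2) / (2 * d * x) ≠ -1 := by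
    intro h; rw [h] at hun; norm_num at hun
  have hne2 : (d ^ 2 + x ^ 2 - R ^ 2) / (2 * d * x) ≠ 1 := by
    intro h; rw [h] at hun; norm_num at hun
  have hud := hasDerivAt_u hd hx (R := R)
  have harc : HasDerivAt (fun r : ℝ => Real.arccos ((d ^ 2 + r ^ 2 - R ^ 2) / (2 * d * r)))
      (-(1 / Real.sqrt (1 - ((d ^ 2 + x ^ 2 - R ^ 2) / (2 * d * x)) ^ 2))
        * ((x ^ 2 + R ^ 2 - d ^ 2) / (2 * d * x ^ 2))) x :=
    by have := (Real.hasDerivAt_arccos hne1 hne2).comp x hud; exact this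
  have hcoef : HasDerivAt (fun r : ℝ => 2 * r / (π * R ^ 2)) (2 / (π * R ^ 2)) x := by
    simpa using ((hasDerivAt_id x).const_mul 2).div_const (π * R ^ 2)
  have h := hcoef.mul harc
  have hs : 0 < Real.sqrt (S2f R d x) := Real.sqrt_pos.2 hS2
  refine h.congr_deriv ?_
  rw [F1f, sqrt_one_sub_u_sq hd hx hS2]
  field_simp
  ring

lemma hasDerivAt_F1 (hR : 0 < R) (hd : 0 < d) (hx : 0 < x) (hS2 : 0 < S2f R d x) :
    HasDerivAt (F1f R d)
      (-(2 / (π * R ^ 2)) * (((x ^ 2 + R ^ 2 - d ^ 2) + 2 * x ^ 2) * Real.sqrt (S2f R d x) ^ 2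
          - 2 * x ^ 2 * (x ^ 2 + R ^ 2 - d ^ 2) * (d ^ 2 + R ^ 2 - x ^ 2))
        / (x * Real.sqrt (S2f R d x) ^ 3)) x := by
  have hπ : 0 < π := Real.pi_pos
  have hun := u_facts hd hx hS2
  have hne1 : (d ^ 2 + x ^ 2 - R ^ 2) / (2 * d * x) ≠ -1 := by
    intro h; rw [h] at hun; norm_num at hun
  have hne2 : (d ^ 2 + x ^ 2 - R ^ 2) / (2 * d * x) ≠ 1 := by
    intro h; rw [h] at hun; norm_num at hun
  have hud := hasDerivAt_u hd hx (R := R)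
  have harc : HasDerivAt (fun r : ℝ => Real.arccos ((d ^ 2 + r ^ 2 - R ^ 2) / (2 * d * r)))
      (-(1 / Real.sqrt (1 - ((d ^ 2 + x ^ 2 - R ^ 2) / (2 * d * x)) ^ 2))
        * ((x ^ 2 + R ^ 2 - d ^ 2) / (2 * d * x ^ 2))) x :=
    by have := (Real.hasDerivAt_arccos hne1 hne2).comp x hud; exact this
  have hs : 0 < Real.sqrt (S2f R d x) := Real.sqrt_pos.2 hS2
  have hS2d : HasDerivAt (S2f R d) (4 * x * (d ^ 2 + R ^ 2 - x ^ 2)) x := by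
    have hnum : HasDerivAt (fun r : ℝ => d ^ 2 + r ^ 2 - R ^ 2) (2 * x) x := by
      simpa using ((hasDerivAt_pow 2 x).const_add (d ^ 2)).sub_const (R ^ 2)
    have h1 : HasDerivAt (fun r : ℝ => 4 * d ^ 2 * r ^ 2) (4 * d ^ 2 * (2 * x)) x := by
      simpa using (hasDerivAt_pow 2 x).const_mul (4 * d ^ 2)
    have h2 : HasDerivAt (fun r : ℝ => (d ^ 2 + r ^ 2 - R ^ 2) ^ 2)
        (2 * (d ^ 2 + x ^ 2 - R ^ 2) ^ 1 * (2 * x)) x := hnum.pow 2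
    have h3 := h1.sub h2
    have h4 : HasDerivAt (S2f R d)
        (4 * d ^ 2 * (2 * x) - 2 * (d ^ 2 + x ^ 2 - R ^ 2) ^ 1 * (2 * x)) x := h3
    convert h4 using 1
    ring
  have hsqrt : HasDerivAt (fun r : ℝ => Real.sqrt (S2f R d r))
      (1 / (2 * Real.sqrt (S2f R d x)) * (4 * x * (d ^ 2 + R ^ 2 - x ^ 2))) x :=
    (Real.hasDerivAt_sqrt hS2.ne').comp x hS2d
  have hBnum : HasDerivAt (fun r : ℝ => r ^ 2 + R ^ 2 - d ^ 2) (2 * x) x := by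
    simpa using ((hasDerivAt_pow 2 x).add_const (R ^ 2)).sub_const (d ^ 2)
  have hdiv := hBnum.div hsqrt hs.ne'
  have h := ((harc.const_mul (2 / (π * R ^ 2))).sub (hdiv.const_mul (2 / (π * R ^ 2))))
  have hfun : F1f R d = fun r => 2 / (π * R ^ 2)
      * Real.arccos ((d ^ 2 + r ^ 2 - R ^ 2) / (2 * d * r))
      - 2 / (π * R ^ 2) * ((r ^ 2 + R ^ 2 - d ^ 2) / Real.sqrt (S2f R d r)) := rfl
  rw [hfun]
  refine h.congr_deriv ?_
  rw [sqrt_one_sub_u_sq hd hx hS2]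
  generalize Real.sqrt (S2f R d x) = s at hs ⊢
  field_simp
  ring

end Derivs

lemma S2f_pos {R d a x : ℝ} (hR : 0 < R) (hd : 0 < d) (ha0 : 0 ≤ a) (ha1 : d - R ≤ a)
    (hc : R ≤ a ∨ R ≤ d) (hx : x ∈ Set.Ioo a (d + R)) : 0 < S2f R d x := by
  have hx0 : 0 < x := lt_of_le_of_lt ha0 hx.1
  have f1 : 0 < R + x - d := by linarith [hx.1]
  have f2 : 0 < d + R - x := by linarith [hx.2]
  have f3 : 0 < d + x - R := by
    rcases hc with h | h
    · linarith [hx.1]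
    · linarith
  have f4 : 0 < d + x + R := by linarith
  have heq : S2f R d x = (R + x - d) * (d + R - x) * ((d + x - R) * (d + x + R)) := by
    simp only [S2f]; ring
  rw [heq]
  positivity

lemma F1_deriv_nonpos {R d a x : ℝ} (hR : 0 < R) (hd : 0 < d) (ha0 : 0 ≤ a) (ha1 : d - R ≤ a)
    (hc : R ≤ a ∨ R ≤ d) (hx : x ∈ Set.Ioo a (d + R)) : deriv (F1f R d) x ≤ 0 := by
  have hx0 : 0 < x := lt_of_le_of_lt ha0 hx.1
  have hS2 := S2f_pos hR hd ha0 ha1 hc hx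
  have hs : 0 < Real.sqrt (S2f R d x) := Real.sqrt_pos.2 hS2
  rw [(hasDerivAt_F1 hR hd hx0 hS2).deriv]
  have hkey := key_ineq R d x hR hd hx0 (by linarith [hx.1]) hx.2
    (by rcases hc with h | h
        · exact Or.inl (by linarith [hx.1])
        · exact Or.inr h)
  have hN : 0 ≤ ((x ^ 2 + R ^ 2 - d ^ 2) + 2 * x ^ 2) * Real.sqrt (S2f R d x) ^ 2
      - 2 * x ^ 2 * (x ^ 2 + R ^ 2 - d ^ 2) * (d ^ 2 + R ^ 2 - x ^ 2) := by
    have hss : Real.sqrt (S2f R d x) ^ 2 = S2f R d x := Real.sq_sqrt hS2.le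
    rw [hss]
    simp only [S2f]
    nlinarith [hkey]
  apply div_nonpos_of_nonpos_of_nonneg
  · have h5 : 0 ≤ 2 / (π * R ^ 2) * (((x ^ 2 + R ^ 2 - d ^ 2) + 2 * x ^ 2)
        * Real.sqrt (S2f R d x) ^ 2
        - 2 * x ^ 2 * (x ^ 2 + R ^ 2 - d ^ 2) * (d ^ 2 + R ^ 2 - x ^ 2)) :=
      mul_nonneg (by positivity) hN
    linarith [h5]
  · positivity

lemma continuousOn_g {R d a : ℝ} (hR : 0 < R) (hd : 0 < d) (ha0 : 0 ≤ a) :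
    ContinuousOn (gfun R d) (Set.Icc a (d + R)) := by
  have hπ : 0 < π := Real.pi_pos
  intro x hx
  rcases eq_or_lt_of_le (le_trans ha0 hx.1) with h0 | h0
  · have hg0 : gfun R d 0 = 0 := by simp [gfun]
    rw [← h0]
    show Filter.Tendsto (gfun R d) (nhdsWithin 0 (Set.Icc a (d + R))) (nhds (gfun R d 0))
    rw [hg0]
    apply squeeze_zero' (g := fun r : ℝ => 2 * r / R ^ 2)
    · filter_upwards [self_mem_nhdsWithin] with y hy
      have hy0 : 0 ≤ y := le_trans ha0 hy.1
      exact mul_nonneg (by positivity) (Real.arccos_nonneg _)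
    · filter_upwards [self_mem_nhdsWithin] with y hy
      have hy0 : 0 ≤ y := le_trans ha0 hy.1
      calc gfun R d y ≤ 2 * y / (π * R ^ 2) * π :=
            mul_le_mul_of_nonneg_left (Real.arccos_le_pi _) (by positivity)
        _ = 2 * y / R ^ 2 := by field_simp
    · have hcont : Continuous (fun r : ℝ => 2 * r / R ^ 2) := by
        apply Continuous.div_const
        exact continuous_const.mul continuous_id
      have := (hcont.tendsto 0).mono_left (nhdsWithin_le_nhds (s := Set.Icc a (d + R)))
      simpa using this
  · have hne : 2 * d * x ≠ 0 := by positivity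
    have hu : ContinuousAt (fun r : ℝ => (d ^ 2 + r ^ 2 - R ^ 2) / (2 * d * r)) x := by
      apply ContinuousAt.div
      · fun_prop
      · fun_prop
      · exact hne
    have hca : ContinuousAt (gfun R d) x := by
      apply ContinuousAt.mul
      · fun_prop
      · exact Real.continuous_arccos.continuousAt.comp hu
    exact hca.continuousWithinAt

lemma key_concave {R d a : ℝ} (hR : 0 < R) (hd : 0 < d) (ha0 : 0 ≤ a)
    (ha1 : d - R ≤ a) (hc : R ≤ a ∨ R ≤ d) :
    ConcaveOn ℝ (Set.Icc a (d + R)) (gfun R d) := by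
  have hx0 : ∀ x ∈ Set.Ioo a (d + R), 0 < x := fun x hx => lt_of_le_of_lt ha0 hx.1
  have hev : ∀ x ∈ Set.Ioo a (d + R), deriv (gfun R d) =ᶠ[nhds x] F1f R d := by
    intro x hx
    filter_upwards [isOpen_Ioo.mem_nhds hx] with y hy
    exact (hasDerivAt_g hR hd (hx0 y hy) (S2f_pos hR hd ha0 ha1 hc hy)).deriv
  apply concaveOn_of_deriv2_nonpos (convex_Icc _ _) (continuousOn_g hR hd ha0)
  · rw [interior_Icc]
    intro x hx
    exact (hasDerivAt_g hR hd (hx0 x hx)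
      (S2f_pos hR hd ha0 ha1 hc hx)).differentiableAt.differentiableWithinAt
  · rw [interior_Icc]
    intro x hx
    have hF1 := (hasDerivAt_F1 hR hd (hx0 x hx) (S2f_pos hR hd ha0 ha1 hc hx)).differentiableAt
    exact (((hev x hx).differentiableAt_iff).2 hF1).differentiableWithinAt
  · rw [interior_Icc]
    intro x hx
    show deriv (deriv (gfun R d)) x ≤ 0
    rw [(hev x hx).deriv_eq]
    exact F1_deriv_nonpos hR hd ha0 ha1 hc hx

lemma profile_eqOn {R d a : ℝ} (hR : 0 < R) (hd : 0 < d) (ha0 : 0 ≤ a)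
    (ha1 : d - R ≤ a) (hc : R ≤ a ∨ R ≤ d) :
    Set.EqOn (fun r => profile R d r) (gfun R d) (Set.Icc a (d + R)) := by
  intro r hr
  have h1 : ¬(R + d < r ∨ r < d - R) := by
    push_neg
    exact ⟨by linarith [hr.2], by linarith [hr.1]⟩
  simp only [profile, gfun]
  rcases le_or_gt r (R - d) with h2 | h2
  · rw [if_pos h2]
    rcases hc with h | h
    · exfalso; linarith [hr.1]
    · have hr0 : r = 0 := le_antisymm (by linarith) (le_trans ha0 hr.1)
      subst hr0
      simp
  · rw [if_neg (not_le.2 h2), if_neg h1]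

/-- **Concavity of the one-particle profile** (Appendix B Proposition).  For every
`d ≥ 0` the profile `r ↦ f(d,r)` is concave on `[max{R, d-R}, d+R]` (the intersection of
its support with `[R,∞)`), and if `d ≥ R` it is concave on its full support
`[d-R, d+R]`. -/
theorem profile_concavity (R : ℝ) (hR : 0 < R) :
    (∀ d : ℝ, 0 ≤ d →
      ConcaveOn ℝ (Set.Icc (max R (d - R)) (d + R)) (fun r => profile R d r))
    ∧ ∀ d : ℝ, R ≤ d →
      ConcaveOn ℝ (Set.Icc (d - R) (d + R)) (fun r => profile R d r) := by
  constructor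
  · intro d hd
    rcases eq_or_lt_of_le hd with h0 | h0
    · rw [← h0]
      have hmax : max R ((0:ℝ) - R) = R := max_eq_left (by linarith)
      rw [hmax, zero_add, Set.Icc_self]
      exact concaveOn_singleton R _
    · have hmax0 : (0:ℝ) ≤ max R (d - R) := le_trans hR.le (le_max_left _ _)
      exact concaveOn_congrOn
        (key_concave hR h0 hmax0 (le_max_right _ _) (Or.inl (le_max_left _ _)))
        (profile_eqOn hR h0 hmax0 (le_max_right _ _) (Or.inl (le_max_left _ _)))
  · intro d hdR
    have hd : 0 < d := lt_of_lt_of_le hR hdR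
    have ha0 : (0:ℝ) ≤ d - R := by linarith
    exact concaveOn_congrOn (key_concave hR hd ha0 le_rfl (Or.inr hdR))
      (profile_eqOn hR hd ha0 le_rfl (Or.inr hdR))
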